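/- Let X and Y be real-valued random variables with finite range on a discrete probability space, and let Z = aX + bY for real constants a and b with a ≠ 0 and b ≠ 0. Then the three joint Shannon entropies coincide: H(X, Y) = H(X, Z) = H(Y, Z). -/

import Mathlib

open MeasureTheory

/-- Shannon entropy of a discrete random variable `X`:
`H(X) = -∑ₓ p(X = x) log p(X = x)` (sum over all values; terms with zero
probability vanish since `negMulLog 0 = 0`). -/
noncomputable def entropy {Ω S : Type*} [MeasurableSpace Ω] (μ : Measure Ω)
    (X : Ω → S) : ℝ :=
  ∑' s : S, Real.negMulLog (μ (X ⁻¹' {s})).toReal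

/-- Conditional Shannon entropy of `Y` given `X`:
`H(Y|X) = -∑_{x,y} p(X = x, Y = y) log p(Y = y | X = x)`. -/
noncomputable def condEntropy {Ω S T : Type*} [MeasurableSpace Ω] (μ : Measure Ω)
    (Y : Ω → T) (X : Ω → S) : ℝ :=
  -∑' p : S × T,
      (μ (X ⁻¹' {p.1} ∩ Y ⁻¹' {p.2})).toReal *
        Real.log ((μ (X ⁻¹' {p.1} ∩ Y ⁻¹' {p.2})).toReal / (μ (X ⁻¹' {p.1})).toReal)

/-- Entropy is invariant under composing with a bijection. -/
theorem entropy_comp_equiv {Ω S T : Type*} [MeasurableSpace Ω] (μ : Measure Ω)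
    (W : Ω → S) (e : S ≃ T) : entropy μ (fun ω => e (W ω)) = entropy μ W := by
  unfold entropy
  rw [← e.tsum_eq (fun t => Real.negMulLog (μ ((fun ω => e (W ω)) ⁻¹' {t})).toReal)]
  refine tsum_congr fun s => ?_
  have h : (fun ω => e (W ω)) ⁻¹' {e s} = W ⁻¹' {s} := by ext ω; simp
  rw [h]

/-- The shear map `(x, y) ↦ (x, a x + b y)` as a bijection of `ℝ × ℝ` (for `b ≠ 0`). -/
noncomputable def shearEquiv (a b : ℝ) (hb : b ≠ 0) : (ℝ × ℝ) ≃ (ℝ × ℝ) where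
  toFun p := (p.1, a * p.1 + b * p.2)
  invFun p := (p.1, (p.2 - a * p.1) / b)
  left_inv p := by ext <;> field_simp <;> ring
  right_inv p := by ext <;> field_simp <;> ring

/-- The map `(x, z) ↦ ((z - a x) / b, z)` as a bijection of `ℝ × ℝ` (for `a, b ≠ 0`). -/
noncomputable def swapEquiv (a b : ℝ) (ha : a ≠ 0) (hb : b ≠ 0) : (ℝ × ℝ) ≃ (ℝ × ℝ) where
  toFun p := ((p.2 - a * p.1) / b, p.2)
  invFun p := ((p.2 - b * p.1) / a, p.2)
  left_inv p := by ext <;> field_simp <;> ring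
  right_inv p := by ext <;> field_simp <;> ring

/-- Proposition 1: if `Z = aX + bY` with `a ≠ 0` and `b ≠ 0`, then
`H(X, Y) = H(X, Z) = H(Y, Z)`. -/
theorem jointEntropy_eq_of_linear_comb {Ω : Type*} [MeasurableSpace Ω]
    [Countable Ω] [DiscreteMeasurableSpace Ω]
    (μ : Measure Ω) [IsProbabilityMeasure μ]
    (X Y : Ω → ℝ) (hX : Measurable X) (hY : Measurable Y)
    (hXfin : (Set.range X).Finite) (hYfin : (Set.range Y).Finite)
    (a b : ℝ) (ha : a ≠ 0) (hb : b ≠ 0) :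
    entropy μ (fun ω => (X ω, Y ω)) =
        entropy μ (fun ω => (X ω, a * X ω + b * Y ω)) ∧
      entropy μ (fun ω => (X ω, a * X ω + b * Y ω)) =
        entropy μ (fun ω => (Y ω, a * X ω + b * Y ω)) := by
  constructor
  · have h1 : (fun ω => (X ω, a * X ω + b * Y ω)) =
        fun ω => shearEquiv a b hb ((fun ω => (X ω, Y ω)) ω) := rfl
    rw [h1, entropy_comp_equiv]
  · have h2 : (fun ω => (Y ω, a * X ω + b * Y ω)) =
        fun ω => swapEquiv a b ha hb ((fun ω => (X ω, a * X ω + b * Y ω)) ω) := by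
      funext ω
      show _ = ((a * X ω + b * Y ω - a * X ω) / b, a * X ω + b * Y ω)
      rw [add_sub_cancel_left, mul_div_cancel_left₀ _ hb]
    rw [h2, entropy_comp_equiv]
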